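/- Let σ = (λ₁,...,λ₅) be real numbers with λ₁ ≥ λ₂ ≥ λ₃ ≥ λ₄ ≥ λ₅ ≥ -λ₁, e₁(σ) ≥ 0 and λ₃ > e₁(σ). Suppose g is a real root of Q_σ(z) = 2z³ - 2(λ₃+λ₅)z² - (e₂(σ)+(λ₃-λ₅)²)z + e₃(σ) + e₁(σ)(λ₃²+λ₅²) with 0 ≤ g ≤ e₁(σ)/2. Then the matrix B(σ,g) is entrywise nonnegative, and hence σ is the spectrum of a 5×5 symmetric nonnegative matrix. -/

import Mathlib

open Polynomial

/-- The real matrix pattern `B(σ, g)` of the paper (with real square roots). -/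
noncomputable def patternBR (l1 l2 l3 l4 l5 g : ℝ) : Matrix (Fin 5) (Fin 5) ℝ :=
  let e1 : ℝ := l1 + l2 + l3 + l4 + l5
  let e2 : ℝ := l1*l2+l1*l3+l1*l4+l1*l5+l2*l3+l2*l4+l2*l5+l3*l4+l3*l5+l4*l5
  let k : ℝ := g - l3 - l5
  let l : ℝ := (g - l3) * (l5 - g)
  let m : ℝ := -g^2 + e1 * g - (1/2) * (e2 + l3^2 + l5^2)
  !![g, Real.sqrt l, Real.sqrt m, 0, 0;
     Real.sqrt l, 0, 0, 0, k;
     Real.sqrt m, 0, e1 - 2*g, Real.sqrt m, 0;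
     0, 0, Real.sqrt m, g, Real.sqrt l;
     0, k, 0, Real.sqrt l, 0]

set_option maxHeartbeats 4000000 in
theorem det_fin_five_of {R : Type*} [CommRing R] (a00 a01 a02 a03 a04 a10 a11 a12 a13 a14 a20 a21 a22 a23 a24 a30 a31 a32 a33 a34 a40 a41 a42 a43 a44 : R) :
    Matrix.det !![a00,a01,a02,a03,a04; a10,a11,a12,a13,a14; a20,a21,a22,a23,a24;
      a30,a31,a32,a33,a34; a40,a41,a42,a43,a44] =
      0 + a00*a11*a22*a33*a44
      - a00*a11*a22*a34*a43
      - a00*a11*a23*a32*a44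
      + a00*a11*a23*a34*a42
      + a00*a11*a24*a32*a43
      - a00*a11*a24*a33*a42
      - a00*a12*a21*a33*a44
      + a00*a12*a21*a34*a43
      + a00*a12*a23*a31*a44
      - a00*a12*a23*a34*a41
      - a00*a12*a24*a31*a43
      + a00*a12*a24*a33*a41
      + a00*a13*a21*a32*a44
      - a00*a13*a21*a34*a42
      - a00*a13*a22*a31*a44
      + a00*a13*a22*a34*a41
      + a00*a13*a24*a31*a42
      - a00*a13*a24*a32*a41
      - a00*a14*a21*a32*a43
      + a00*a14*a21*a33*a42
      + a00*a14*a22*a31*a43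
      - a00*a14*a22*a33*a41
      - a00*a14*a23*a31*a42
      + a00*a14*a23*a32*a41
      - a01*a10*a22*a33*a44
      + a01*a10*a22*a34*a43
      + a01*a10*a23*a32*a44
      - a01*a10*a23*a34*a42
      - a01*a10*a24*a32*a43
      + a01*a10*a24*a33*a42
      + a01*a12*a20*a33*a44
      - a01*a12*a20*a34*a43
      - a01*a12*a23*a30*a44
      + a01*a12*a23*a34*a40
      + a01*a12*a24*a30*a43
      - a01*a12*a24*a33*a40
      - a01*a13*a20*a32*a44
      + a01*a13*a20*a34*a42
      + a01*a13*a22*a30*a44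
      - a01*a13*a22*a34*a40
      - a01*a13*a24*a30*a42
      + a01*a13*a24*a32*a40
      + a01*a14*a20*a32*a43
      - a01*a14*a20*a33*a42
      - a01*a14*a22*a30*a43
      + a01*a14*a22*a33*a40
      + a01*a14*a23*a30*a42
      - a01*a14*a23*a32*a40
      + a02*a10*a21*a33*a44
      - a02*a10*a21*a34*a43
      - a02*a10*a23*a31*a44
      + a02*a10*a23*a34*a41
      + a02*a10*a24*a31*a43
      - a02*a10*a24*a33*a41
      - a02*a11*a20*a33*a44
      + a02*a11*a20*a34*a43
      + a02*a11*a23*a30*a44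
      - a02*a11*a23*a34*a40
      - a02*a11*a24*a30*a43
      + a02*a11*a24*a33*a40
      + a02*a13*a20*a31*a44
      - a02*a13*a20*a34*a41
      - a02*a13*a21*a30*a44
      + a02*a13*a21*a34*a40
      + a02*a13*a24*a30*a41
      - a02*a13*a24*a31*a40
      - a02*a14*a20*a31*a43
      + a02*a14*a20*a33*a41
      + a02*a14*a21*a30*a43
      - a02*a14*a21*a33*a40
      - a02*a14*a23*a30*a41
      + a02*a14*a23*a31*a40
      - a03*a10*a21*a32*a44
      + a03*a10*a21*a34*a42
      + a03*a10*a22*a31*a44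
      - a03*a10*a22*a34*a41
      - a03*a10*a24*a31*a42
      + a03*a10*a24*a32*a41
      + a03*a11*a20*a32*a44
      - a03*a11*a20*a34*a42
      - a03*a11*a22*a30*a44
      + a03*a11*a22*a34*a40
      + a03*a11*a24*a30*a42
      - a03*a11*a24*a32*a40
      - a03*a12*a20*a31*a44
      + a03*a12*a20*a34*a41
      + a03*a12*a21*a30*a44
      - a03*a12*a21*a34*a40
      - a03*a12*a24*a30*a41
      + a03*a12*a24*a31*a40
      + a03*a14*a20*a31*a42
      - a03*a14*a20*a32*a41
      - a03*a14*a21*a30*a42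
      + a03*a14*a21*a32*a40
      + a03*a14*a22*a30*a41
      - a03*a14*a22*a31*a40
      + a04*a10*a21*a32*a43
      - a04*a10*a21*a33*a42
      - a04*a10*a22*a31*a43
      + a04*a10*a22*a33*a41
      + a04*a10*a23*a31*a42
      - a04*a10*a23*a32*a41
      - a04*a11*a20*a32*a43
      + a04*a11*a20*a33*a42
      + a04*a11*a22*a30*a43
      - a04*a11*a22*a33*a40
      - a04*a11*a23*a30*a42
      + a04*a11*a23*a32*a40
      + a04*a12*a20*a31*a43
      - a04*a12*a20*a33*a41
      - a04*a12*a21*a30*a43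
      + a04*a12*a21*a33*a40
      + a04*a12*a23*a30*a41
      - a04*a12*a23*a31*a40
      - a04*a13*a20*a31*a42
      + a04*a13*a20*a32*a41
      + a04*a13*a21*a30*a42
      - a04*a13*a21*a32*a40
      - a04*a13*a22*a30*a41
      + a04*a13*a22*a31*a40 := by
  simp [Matrix.det_succ_row_zero, Fin.sum_univ_succ, Fin.zero_succAbove, Fin.succ_succAbove_zero,
    Fin.succ_succAbove_one, Fin.succ_succAbove_succ, Fin.succ_zero_eq_one, Fin.succ_one_eq_two,
    Matrix.cons_val_succ, Matrix.cons_val_zero, Matrix.cons_val_one, Fin.succAbove, Fin.castSucc,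
    Fin.castAdd, Fin.castLE]
  ring

set_option maxHeartbeats 4000000 in
set_option maxRecDepth 10000 in
theorem stmt7 (l1 l2 l3 l4 l5 g : ℝ)
    (h12 : l1 ≥ l2) (h23 : l2 ≥ l3) (h34 : l3 ≥ l4) (h45 : l4 ≥ l5) (h5 : l5 ≥ -l1)
    (htrace : l1 + l2 + l3 + l4 + l5 ≥ 0)
    (h3 : l3 > l1 + l2 + l3 + l4 + l5)
    (hg : 2*g^3 - 2*(l3 + l5)*g^2
        - ((l1*l2+l1*l3+l1*l4+l1*l5+l2*l3+l2*l4+l2*l5+l3*l4+l3*l5+l4*l5) + (l3 - l5)^2) * g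
        + (l1*l2*l3+l1*l2*l4+l1*l2*l5+l1*l3*l4+l1*l3*l5+l1*l4*l5+l2*l3*l4+l2*l3*l5+l2*l4*l5+l3*l4*l5)
        + (l1 + l2 + l3 + l4 + l5) * (l3^2 + l5^2) = 0)
    (hg0 : 0 ≤ g) (hg1 : g ≤ (l1 + l2 + l3 + l4 + l5) / 2) :
    (∀ i j, 0 ≤ patternBR l1 l2 l3 l4 l5 g i j) ∧
    ∃ A : Matrix (Fin 5) (Fin 5) ℝ, A.IsSymm ∧ (∀ i j, 0 ≤ A i j) ∧
      A.charpoly = (X - C l1) * (X - C l2) * (X - C l3) * (X - C l4) * (X - C l5) := by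
  have he2 : l1*l2+l1*l3+l1*l4+l1*l5+l2*l3+l2*l4+l2*l5+l3*l4+l3*l5+l4*l5 + l3^2 + l5^2 ≤ 0 := by
    nlinarith [mul_nonneg (by linarith : (0:ℝ) ≤ l1 + l5) (by linarith : (0:ℝ) ≤ l1 - l5),
      mul_nonneg (by linarith : (0:ℝ) ≤ l2 - l3) (by linarith : (0:ℝ) ≤ l2 + l3),
      mul_nonneg htrace (by linarith : (0:ℝ) ≤ l3 - (l1+l2+l3+l4+l5)),
      mul_nonneg (by linarith : (0:ℝ) ≤ l3) (by linarith : (0:ℝ) ≤ l3 - (l1+l2+l3+l4+l5)),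
      mul_nonneg (by linarith : (0:ℝ) ≤ l3 - l4) (by linarith : (0:ℝ) ≤ l1 + l4),
      sq_nonneg (l4 - l5), sq_nonneg (l3 + l4), sq_nonneg l4]
  have hl5 : l5 < 0 := by linarith
  have hk : 0 ≤ g - l3 - l5 := by linarith
  have hL : (0:ℝ) ≤ (g - l3) * (l5 - g) := by
    have h1 : g - l3 ≤ 0 := by linarith
    have h2 : l5 - g ≤ 0 := by linarith
    nlinarith [mul_nonneg (neg_nonneg.2 h1) (neg_nonneg.2 h2)]
  have hM : (0:ℝ) ≤ -g^2 + (l1 + l2 + l3 + l4 + l5) * g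
      - 1/2 * (l1*l2+l1*l3+l1*l4+l1*l5+l2*l3+l2*l4+l2*l5+l3*l4+l3*l5+l4*l5 + l3^2 + l5^2) := by
    nlinarith [mul_nonneg hg0 (by linarith : (0:ℝ) ≤ (l1 + l2 + l3 + l4 + l5) - g)]
  have hpos : ∀ i j, 0 ≤ patternBR l1 l2 l3 l4 l5 g i j := by
    intro i j
    fin_cases i <;> fin_cases j <;>
      simp [patternBR, Matrix.vecHead, Matrix.vecTail] <;>
      first
        | linarith
        | positivity
  refine ⟨hpos, patternBR l1 l2 l3 l4 l5 g, ?_, hpos, ?_⟩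
  · rw [Matrix.IsSymm]
    ext i j
    fin_cases i <;> fin_cases j <;> simp [patternBR, Matrix.vecHead, Matrix.vecTail]
  · set sl : ℝ := Real.sqrt ((g - l3) * (l5 - g)) with hsl_def
    set sm : ℝ := Real.sqrt (-g^2 + (l1 + l2 + l3 + l4 + l5) * g
      - 1/2 * (l1*l2+l1*l3+l1*l4+l1*l5+l2*l3+l2*l4+l2*l5+l3*l4+l3*l5+l4*l5 + l3^2 + l5^2)) with hsm_def
    have hsl : sl^2 = (g - l3) * (l5 - g) := Real.sq_sqrt hL
    have hsm : sm^2 = -g^2 + (l1 + l2 + l3 + l4 + l5) * g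
      - 1/2 * (l1*l2+l1*l3+l1*l4+l1*l5+l2*l3+l2*l4+l2*l5+l3*l4+l3*l5+l4*l5 + l3^2 + l5^2) :=
      Real.sq_sqrt hM
    have hslC : (C sl)^2 = (C g - C l3) * (C l5 - C g) := by
      have := congrArg C hsl
      simpa only [C_pow, C_mul, C_sub] using this
    have hsm2 : 2 * sm^2 = -2*g^2 + 2*(l1 + l2 + l3 + l4 + l5) * g
        - (l1*l2+l1*l3+l1*l4+l1*l5+l2*l3+l2*l4+l2*l5+l3*l4+l3*l5+l4*l5 + l3^2 + l5^2) := by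
      rw [hsm]; ring
    have hsmC : (2 : Polynomial ℝ) * (C sm)^2 = -2*(C g)^2
        + 2*(C l1 + C l2 + C l3 + C l4 + C l5) * (C g)
        - ((C l1)*(C l2)+(C l1)*(C l3)+(C l1)*(C l4)+(C l1)*(C l5)+(C l2)*(C l3)+(C l2)*(C l4)
          +(C l2)*(C l5)+(C l3)*(C l4)+(C l3)*(C l5)+(C l4)*(C l5) + (C l3)^2 + (C l5)^2) := by
      have := congrArg C hsm2
      simpa only [C_pow, C_mul, C_sub, C_add, C_neg, map_ofNat] using this
    have hQC : 2*(C g)^3 - 2*(C l3 + C l5)*(C g)^2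
        - (((C l1)*(C l2)+(C l1)*(C l3)+(C l1)*(C l4)+(C l1)*(C l5)+(C l2)*(C l3)+(C l2)*(C l4)
          +(C l2)*(C l5)+(C l3)*(C l4)+(C l3)*(C l5)+(C l4)*(C l5)) + (C l3 - C l5)^2) * (C g)
        + ((C l1)*(C l2)*(C l3)+(C l1)*(C l2)*(C l4)+(C l1)*(C l2)*(C l5)+(C l1)*(C l3)*(C l4)
          +(C l1)*(C l3)*(C l5)+(C l1)*(C l4)*(C l5)+(C l2)*(C l3)*(C l4)+(C l2)*(C l3)*(C l5)
          +(C l2)*(C l4)*(C l5)+(C l3)*(C l4)*(C l5))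
        + (C l1 + C l2 + C l3 + C l4 + C l5) * ((C l3)^2 + (C l5)^2) = 0 := by
      have := congrArg C hg
      simpa only [C_pow, C_mul, C_sub, C_add, C_neg, map_ofNat, C_0] using this
    have hmat : patternBR l1 l2 l3 l4 l5 g =
        !![g, sl, sm, 0, 0;
           sl, 0, 0, 0, g - l3 - l5;
           sm, 0, l1 + l2 + l3 + l4 + l5 - 2*g, sm, 0;
           0, 0, sm, g, sl;
           0, g - l3 - l5, 0, sl, 0] := rfl
    have hcm : Matrix.charmatrix (!![g, sl, sm, 0, 0;
           sl, 0, 0, 0, g - l3 - l5;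
           sm, 0, l1 + l2 + l3 + l4 + l5 - 2*g, sm, 0;
           0, 0, sm, g, sl;
           0, g - l3 - l5, 0, sl, 0]) =
        !![X - C g, -C sl, -C sm, 0, 0;
           -C sl, X, 0, 0, -C (g - l3 - l5);
           -C sm, 0, X - C (l1 + l2 + l3 + l4 + l5 - 2*g), -C sm, 0;
           0, 0, -C sm, X - C g, -C sl;
           0, -C (g - l3 - l5), 0, -C sl, X] := by
      apply Matrix.ext
      intro i j
      fin_cases i <;> fin_cases j <;>
        simp [Matrix.charmatrix_apply_eq, Matrix.charmatrix_apply_ne,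
          Matrix.vecHead, Matrix.vecTail]
    rw [hmat, Matrix.charpoly, hcm, det_fin_five_of]
    simp only [map_sub, map_add, map_mul, map_ofNat]
    linear_combination ((X - C l3) * (X - C l5)) * hQC + ((-2 : Polynomial ℝ)*X^3 + (2 : Polynomial ℝ)*(C sm)^2*X + (1 : Polynomial ℝ)*(C sl)^2*X + (-2 : Polynomial ℝ)*(C g)*X^2 + (-2 : Polynomial ℝ)*(C g)*(C sm)^2 + (2 : Polynomial ℝ)*(C g)*(C sl)^2 + (3 : Polynomial ℝ)*(C g)^2*X + (-2 : Polynomial ℝ)*(C g)^3 + (2 : Polynomial ℝ)*(C l5)*X^2 + (2 : Polynomial ℝ)*(C l5)*(C sm)^2 + (-1 : Polynomial ℝ)*(C l5)*(C sl)^2 + (-1 : Polynomial ℝ)*(C l5)*(C g)*X + (3 : Polynomial ℝ)*(C l5)*(C g)^2 + (-1 : Polynomial ℝ)*(C l5)^2*(C g) + (2 : Polynomial ℝ)*(C l4)*X^2 + (-1 : Polynomial ℝ)*(C l4)*(C sl)^2 + (-2 : Polynomial ℝ)*(C l4)*(C g)*X + (1 : Polynomial ℝ)*(C l4)*(C g)^2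 + (-1 : Polynomial ℝ)*(C l4)*(C l5)*(C g) + (2 : Polynomial ℝ)*(C l3)*X^2 + (2 : Polynomial ℝ)*(C l3)*(C sm)^2 + (-1 : Polynomial ℝ)*(C l3)*(C sl)^2 + (-1 : Polynomial ℝ)*(C l3)*(C g)*X + (3 : Polynomial ℝ)*(C l3)*(C g)^2 + (-1 : Polynomial ℝ)*(C l3)*(C l5)*X + (-4 : Polynomial ℝ)*(C l3)*(C l5)*(C g) + (1 : Polynomial ℝ)*(C l3)*(C l5)^2 + (-1 : Polynomial ℝ)*(C l3)*(C l4)*(C g) + (1 : Polynomial ℝ)*(C l3)*(C l4)*(C l5) + (-1 : Polynomial ℝ)*(C l3)^2*(C g) + (1 : Polynomial ℝ)*(C l3)^2*(C l5) + (2 : Polynomial ℝ)*(C l2)*X^2 + (-1 : Polynomial ℝ)*(C l2)*(C sl)^2 + (-2 : Polynomial ℝ)*(C l2)*(C g)*X + (1 : Polynomial ℝ)*(C l2)*(C g)^2 + (-1 : Polynomial ℝ)*(C l2)*(C l5)*(C g) + (-1 : Polynomial ℝ)*(C l2)*(C l3)*(C g) + (1 : Polynomial ℝ)*(C l2)*(C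 l3)*(C l5) + (2 : Polynomial ℝ)*(C l1)*X^2 + (-1 : Polynomial ℝ)*(C l1)*(C sl)^2 + (-2 : Polynomial ℝ)*(C l1)*(C g)*X + (1 : Polynomial ℝ)*(C l1)*(C g)^2 + (-1 : Polynomial ℝ)*(C l1)*(C l5)*(C g) + (-1 : Polynomial ℝ)*(C l1)*(C l3)*(C g) + (1 : Polynomial ℝ)*(C l1)*(C l3)*(C l5)) * hslC + ((-1 : Polynomial ℝ)*X^3 + (1 : Polynomial ℝ)*(C g)*X^2 + (-1 : Polynomial ℝ)*(C l5)*(C g)*X + (1 : Polynomial ℝ)*(C l5)^2*X + (-1 : Polynomial ℝ)*(C l3)*(C g)*X + (1 : Polynomial ℝ)*(C l3)*(C l5)*X + (1 : Polynomial ℝ)*(C l3)*(C l5)*(C g) + (-1 : Polynomial ℝ)*(C l3)*(C l5)^2 + (1 : Polynomial ℝ)*(C l3)^2*X + (-1 : Polynomial ℝ)*(C l3)^2*(C l5)) * hsmC
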